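/- The conditional expectation η_n satisfies |η_n| ≤ ∑_{i=n}^{N} (E[H_i^2 | F_{n-1}])^{1/2} · δ_n^{1/2} almost surely; in particular η_n is finite a.s. and η_n^2/δ_n ≤ (N-n+1) ∑_{i=n}^{N} E[H_i^2 | F_{n-1}]. -/

import Mathlib

open MeasureTheory Finset
lemma aux_cs_pointwise {a b c : ℝ} (ha : 0 ≤ a) (hb : 0 ≤ b)
    (h : ∀ q : ℚ, 0 < q → c ≤ ((q : ℝ) * a + b / q) / 2) :
    c ≤ Real.sqrt a * Real.sqrt b := by
  have hreal : ∀ t : ℝ, 0 < t → c ≤ (t * a + b / t) / 2 := by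
    intro t ht
    refine le_of_forall_pos_le_add fun ε hε => ?_
    have hden : (0:ℝ) < a + 1 := by linarith
    have hpos : (0:ℝ) < 2 * ε / (a + 1) := by positivity
    obtain ⟨q, hq1, hq2⟩ := exists_rat_btwn (show t < t + 2 * ε / (a + 1) by linarith)
    have hq0' : (0:ℝ) < (q:ℝ) := ht.trans hq1
    have hq0 : 0 < q := by exact_mod_cast hq0'
    have h1 := h q hq0
    have hbq : b / (q:ℝ) ≤ b / t := by gcongr
    have hqa : (q:ℝ) * a ≤ (t + 2 * ε / (a + 1)) * a := mul_le_mul_of_nonneg_right hq2.le ha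
    have hextra : (ε / (a + 1)) * a ≤ ε := by
      rw [div_mul_eq_mul_div, div_le_iff₀ hden]
      nlinarith
    calc c ≤ ((q:ℝ) * a + b / q) / 2 := h1
      _ ≤ ((t + 2 * ε / (a + 1)) * a + b / t) / 2 := by linarith
      _ = (t * a + b / t) / 2 + (ε / (a + 1)) * a := by ring
      _ ≤ (t * a + b / t) / 2 + ε := by linarith
  refine le_of_forall_pos_le_add fun ε hε => ?_
  rcases eq_or_lt_of_le ha with haz | ha'
  · have ht : (0:ℝ) < (b + 1) / ε := by positivity
    have h1 := hreal _ ht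
    rw [← haz] at h1
    have hb' : b / ((b + 1) / ε) ≤ ε := by
      rw [div_div_eq_mul_div, div_le_iff₀ (by linarith : (0:ℝ) < b + 1)]
      nlinarith
    have h0 : (0:ℝ) ≤ Real.sqrt 0 * Real.sqrt b := by positivity
    rw [← haz]
    nlinarith
  · have hsa : 0 < Real.sqrt a := Real.sqrt_pos.2 ha'
    have hsq : Real.sqrt a * Real.sqrt a = a := Real.mul_self_sqrt ha'.le
    set ε' : ℝ := 2 * ε / Real.sqrt a with hε'
    have hε'0 : 0 < ε' := by positivity
    have hsb : 0 ≤ Real.sqrt b := Real.sqrt_nonneg b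
    set t : ℝ := (Real.sqrt b + ε') / Real.sqrt a with ht_def
    have ht : 0 < t := by positivity
    have h1 := hreal t ht
    have hta : t * a = (Real.sqrt b + ε') * Real.sqrt a := by
      rw [ht_def, div_mul_eq_mul_div, div_eq_iff hsa.ne', mul_assoc, hsq]
    have hbb : b = Real.sqrt b * Real.sqrt b := (Real.mul_self_sqrt hb).symm
    have hbt : b / t ≤ Real.sqrt b * Real.sqrt a := by
      rw [ht_def, div_div_eq_mul_div, div_le_iff₀ (by positivity : (0:ℝ) < Real.sqrt b + ε')]
      calc b * Real.sqrt a = Real.sqrt b * Real.sqrt b * Real.sqrt a := by rw [← hbb]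
        _ ≤ Real.sqrt b * Real.sqrt b * Real.sqrt a
            + Real.sqrt b * Real.sqrt a * ε' := by
            nlinarith [mul_nonneg (mul_nonneg hsb hsa.le) hε'0.le]
        _ = Real.sqrt b * Real.sqrt a * (Real.sqrt b + ε') := by ring
    have hεa : ε' * Real.sqrt a = 2 * ε := by
      rw [hε', div_mul_cancel₀ _ hsa.ne']
    have hexp : (Real.sqrt b + ε') * Real.sqrt a
        = Real.sqrt b * Real.sqrt a + ε' * Real.sqrt a := by ring
    have hcomm : Real.sqrt a * Real.sqrt b = Real.sqrt b * Real.sqrt a := mul_comm _ _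
    linarith


lemma aux_l2_mul_integrable {Ω : Type*} {m0 : MeasurableSpace Ω} {μ : Measure Ω}
    {X Y : Ω → ℝ} (hX : MemLp X 2 μ) (hY : MemLp Y 2 μ) :
    Integrable (fun x => X x * Y x) μ := by
  have hX2 : Integrable (fun y => X y ^ 2) μ := hX.integrable_sq
  have hY2 : Integrable (fun y => Y y ^ 2) μ := hY.integrable_sq
  refine Integrable.mono (((hX2.add hY2).div_const 2)) (hX.1.mul hY.1) (ae_of_all _ fun y => ?_)
  simp only [Pi.add_apply]
  rw [Real.norm_eq_abs, Real.norm_eq_abs, abs_mul]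
  rw [abs_of_nonneg (by positivity : (0:ℝ) ≤ (X y ^ 2 + Y y ^ 2) / 2)]
  nlinarith [sq_nonneg (|X y| - |Y y|), sq_abs (X y), sq_abs (Y y)]

lemma aux_cond_cauchy_schwarz {Ω : Type*} {m m0 : MeasurableSpace Ω}
    {μ : Measure Ω} [IsFiniteMeasure μ] {X Y : Ω → ℝ}
    (hX : MemLp X 2 μ) (hY : MemLp Y 2 μ) :
    ∀ᵐ x ∂μ, |(μ[fun y => X y * Y y|m]) x| ≤
      Real.sqrt ((μ[fun y => X y ^ 2|m]) x) * Real.sqrt ((μ[fun y => Y y ^ 2|m]) x) := by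
  have hX2 : Integrable (fun y => X y ^ 2) μ := hX.integrable_sq
  have hY2 : Integrable (fun y => Y y ^ 2) μ := hY.integrable_sq
  have hXY : Integrable (fun y => X y * Y y) μ := aux_l2_mul_integrable hX hY
  have habs : Integrable (fun y => |X y * Y y|) μ := hXY.abs
  -- |E[XY|m]| ≤ E[|XY||m] a.e.
  have habs_le : ∀ᵐ x ∂μ, |(μ[fun y => X y * Y y|m]) x| ≤ (μ[fun y => abs (X y * Y y)|m]) x := by
    filter_upwards [condExp_mono (m := m) hXY habs
        (ae_of_all μ fun y => le_abs_self (X y * Y y)),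
      (condExp_neg (m := m) (fun y => X y * Y y)).symm.le.trans
        (condExp_mono (m := m) hXY.neg habs
          (ae_of_all μ fun y => neg_le_abs (X y * Y y)))] with x hx1 hx2
    exact abs_le.2 ⟨neg_le.mp (by simpa using hx2), hx1⟩
  have hXnn : 0 ≤ᵐ[μ] μ[fun y => X y ^ 2|m] :=
    condExp_nonneg (ae_of_all _ fun y => sq_nonneg (X y))
  have hYnn : 0 ≤ᵐ[μ] μ[fun y => Y y ^ 2|m] :=
    condExp_nonneg (ae_of_all _ fun y => sq_nonneg (Y y))
  have key : ∀ q : ℚ, ∀ᵐ x ∂μ, 0 < q → (μ[fun y => abs (X y * Y y)|m]) x ≤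
      ((q:ℝ) * (μ[fun y => X y ^ 2|m]) x + (μ[fun y => Y y ^ 2|m]) x / q) / 2 := by
    intro q
    by_cases hq : 0 < q
    swap
    · exact ae_of_all _ fun x hx => absurd hx hq
    have hq' : (0:ℝ) < (q:ℝ) := by exact_mod_cast hq
    have hint1 : Integrable (fun y => ((q:ℝ)/2) * X y ^ 2) μ := hX2.const_mul _
    have hint2 : Integrable (fun y => (1/(2*(q:ℝ))) * Y y ^ 2) μ := hY2.const_mul _
    have hptw : ∀ y, |X y * Y y| ≤ ((q:ℝ)/2) * X y ^ 2 + (1/(2*(q:ℝ))) * Y y ^ 2 := by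
      intro y
      rw [abs_mul]
      have hgoal : |X y| * |Y y| ≤ ((q:ℝ)^2 * X y ^ 2 + Y y ^ 2) / (2*(q:ℝ)) := by
        rw [le_div_iff₀ (by positivity)]
        nlinarith [sq_nonneg ((q:ℝ) * |X y| - |Y y|), sq_abs (X y), sq_abs (Y y)]
      refine hgoal.trans (le_of_eq ?_)
      field_simp
    have hmono := condExp_mono (m := m) habs (hint1.add hint2) (ae_of_all _ hptw)
    have hadd := condExp_add (m := m) (μ := μ) hint1 hint2
    have hs1 := condExp_smul (m := m) (μ := μ) ((q:ℝ)/2) (fun y => X y ^ 2)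
    have hs2 := condExp_smul (m := m) (μ := μ) (1/(2*(q:ℝ))) (fun y => Y y ^ 2)
    have e2 : (fun y => ((q:ℝ)/2) * X y ^ 2) = ((q:ℝ)/2) • (fun y => X y ^ 2) := rfl
    have e3 : (fun y => (1/(2*(q:ℝ))) * Y y ^ 2) = (1/(2*(q:ℝ))) • (fun y => Y y ^ 2) := rfl
    filter_upwards [hmono, hadd, hs1, hs2] with x h1 h2 h3 h4 _
    rw [Pi.add_apply] at h2
    rw [e2, e3] at h2
    rw [h3, h4, Pi.smul_apply, Pi.smul_apply, smul_eq_mul, smul_eq_mul] at h2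
    rw [e2, e3] at h1
    rw [h2] at h1
    refine h1.trans (le_of_eq ?_)
    field_simp
  have hkey : ∀ᵐ x ∂μ, ∀ q : ℚ, 0 < q → (μ[fun y => abs (X y * Y y)|m]) x ≤
      ((q:ℝ) * (μ[fun y => X y ^ 2|m]) x + (μ[fun y => Y y ^ 2|m]) x / q) / 2 :=
    ae_all_iff.2 key
  filter_upwards [habs_le, hXnn, hYnn, hkey] with x h1 h2 h3 h4
  refine le_trans h1 (aux_cs_pointwise h2 h3 fun q hq => h4 q hq)

/-- `A_n = ∑_{i=n}^N ω_i ∏_{j=n+1}^i (1 - β_j ΔS_j)`. -/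
def Aproc {Ω : Type*} (N : ℕ) (w β ΔS : ℕ → Ω → ℝ) (n : ℕ) (x : Ω) : ℝ :=
  ∑ i ∈ Finset.Icc n N, w i x * ∏ j ∈ Finset.Icc (n + 1) i, (1 - β j x * ΔS j x)

/-- `D_n = ∑_{i=n}^N ω_i ∏_{j=n+1}^i (1 - β_j ΔS_j)²`. -/
def Dproc {Ω : Type*} (N : ℕ) (w β ΔS : ℕ → Ω → ℝ) (n : ℕ) (x : Ω) : ℝ :=
  ∑ i ∈ Finset.Icc n N, w i x * ∏ j ∈ Finset.Icc (n + 1) i, (1 - β j x * ΔS j x) ^ 2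


/-- Bound on `η_n = E[ΔS_n ∑_{i=n}^N H_i ω_i ∏_{j=n+1}^i (1 - β_j ΔS_j) | F_{n-1}]`:
`|η_n| ≤ ∑_{i=n}^N (E[H_i² | F_{n-1}])^{1/2} δ_n^{1/2}` a.s., and
`η_n² / δ_n ≤ (N - n + 1) ∑_{i=n}^N E[H_i² | F_{n-1}]` a.s. -/
theorem stmt_7 {Ω : Type*} {m0 : MeasurableSpace Ω} (μ : Measure Ω) [IsProbabilityMeasure μ]
    (N : ℕ) (ℱ : Filtration ℕ m0) (ΔS w : ℕ → Ω → ℝ) (αp δp β : ℕ → Ω → ℝ)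
    (hw : ∀ n x, w n x ∈ Set.Icc (0 : ℝ) 1)
    (hwa : ∀ n, StronglyMeasurable[ℱ n] (w n))
    (hSa : ∀ n, StronglyMeasurable[ℱ n] (ΔS n))
    (hSloc : ∀ n, Integrable (fun x => ΔS n x ^ 2) μ)
    (hβ : ∀ n x, β n x = αp n x / δp n x)
    (hβ0 : ∀ x, β 0 x = 0)
    (hα : ∀ n ∈ Finset.Icc 1 N,
      αp n =ᵐ[μ] μ[fun x => ΔS n x * Aproc N w β ΔS n x | ℱ (n - 1)])
    (hδ : ∀ n ∈ Finset.Icc 1 N,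
      δp n =ᵐ[μ] μ[fun x => ΔS n x ^ 2 * Dproc N w β ΔS n x | ℱ (n - 1)])
    (hAint : ∀ n, Integrable (Aproc N w β ΔS n) μ)
    (hDint : ∀ n, Integrable (Dproc N w β ΔS n) μ)
    (hSAint : ∀ n, Integrable (fun x => ΔS n x * Aproc N w β ΔS n x) μ)
    (hSDint : ∀ n, Integrable (fun x => ΔS n x ^ 2 * Dproc N w β ΔS n x) μ)
    (H : ℕ → Ω → ℝ) (ηp : ℕ → Ω → ℝ)
    (hH : ∀ n, MemLp (H n) 2 μ)
    (hHa : ∀ n, StronglyMeasurable[ℱ n] (H n))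
    (hη : ∀ n ∈ Finset.Icc 1 N,
      ηp n =ᵐ[μ] μ[fun x => ΔS n x *
        ∑ i ∈ Finset.Icc n N, H i x * w i x *
          ∏ j ∈ Finset.Icc (n + 1) i, (1 - β j x * ΔS j x) | ℱ (n - 1)])
    (hηint : ∀ n, Integrable (fun x => ΔS n x *
        ∑ i ∈ Finset.Icc n N, H i x * w i x *
          ∏ j ∈ Finset.Icc (n + 1) i, (1 - β j x * ΔS j x)) μ) :
    ∀ n ∈ Finset.Icc 1 N,
      ∀ᵐ x ∂μ,
        |ηp n x| ≤ (∑ i ∈ Finset.Icc n N,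
            Real.sqrt ((μ[fun y => H i y ^ 2 | ℱ (n - 1)]) x)) * Real.sqrt (δp n x) ∧
        ηp n x ^ 2 / δp n x
          ≤ ((N : ℝ) - n + 1) * ∑ i ∈ Finset.Icc n N, (μ[fun y => H i y ^ 2 | ℱ (n - 1)]) x := by
  intro n hn
  have hn' := hn
  rw [Finset.mem_Icc] at hn
  obtain ⟨hn1, hnN⟩ := hn
  set P : ℕ → Ω → ℝ := fun i x => ∏ j ∈ Finset.Icc (n + 1) i, (1 - β j x * ΔS j x) with hP_def
  set Yf : ℕ → Ω → ℝ := fun i x => w i x * ΔS n x * P i x with hYf_def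
  -- measurability of β on [1, N]
  have hβmeas : ∀ j ∈ Finset.Icc 1 N, AEStronglyMeasurable (β j) μ := by
    intro j hj
    have h1 := hα j hj
    have h2 := hδ j hj
    have hfm : AEStronglyMeasurable (fun x =>
        (μ[fun y => ΔS j y * Aproc N w β ΔS j y|ℱ (j - 1)]) x
          / (μ[fun y => ΔS j y ^ 2 * Dproc N w β ΔS j y|ℱ (j - 1)]) x) μ :=
      ((stronglyMeasurable_condExp.mono (ℱ.le (j - 1))).measurable.div
        (stronglyMeasurable_condExp.mono (ℱ.le (j - 1))).measurable).aestronglyMeasurable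
    refine hfm.congr ?_
    filter_upwards [h1, h2] with x hx1 hx2
    rw [hβ j x, hx1, hx2]
  have hPmeas : ∀ i ∈ Finset.Icc n N, AEStronglyMeasurable (P i) μ := by
    intro i hi
    rw [Finset.mem_Icc] at hi
    refine Finset.aestronglyMeasurable_fun_prod _ fun j hj => ?_
    rw [Finset.mem_Icc] at hj
    exact aestronglyMeasurable_const.sub
      ((hβmeas j (Finset.mem_Icc.2 ⟨by omega, by omega⟩)).mul
        ((hSa j).mono (ℱ.le j)).aestronglyMeasurable)
  have hYmeas : ∀ i ∈ Finset.Icc n N, AEStronglyMeasurable (Yf i) μ := by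
    intro i hi
    exact (((hwa i).mono (ℱ.le i)).aestronglyMeasurable.mul
      ((hSa n).mono (ℱ.le n)).aestronglyMeasurable).mul (hPmeas i hi)
  -- nonnegativity of D
  have hD0 : ∀ x, 0 ≤ Dproc N w β ΔS n x := by
    intro x
    refine Finset.sum_nonneg fun k _ => mul_nonneg (hw k x).1 ?_
    exact Finset.prod_nonneg fun j _ => sq_nonneg _
  -- pointwise bound Yf i ^ 2 ≤ ΔS² D
  have hYsq_le : ∀ i ∈ Finset.Icc n N, ∀ x,
      Yf i x ^ 2 ≤ ΔS n x ^ 2 * Dproc N w β ΔS n x := by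
    intro i hi x
    have h1 : ΔS n x ^ 2 * Dproc N w β ΔS n x
        = ∑ k ∈ Finset.Icc n N, ΔS n x ^ 2 * (w k x * P k x ^ 2) := by
      simp only [Dproc, hP_def, Finset.mul_sum]
      refine Finset.sum_congr rfl fun k _ => ?_
      rw [← Finset.prod_pow]
    have h2 : ΔS n x ^ 2 * (w i x * P i x ^ 2)
        ≤ ∑ k ∈ Finset.Icc n N, ΔS n x ^ 2 * (w k x * P k x ^ 2) := by
      refine Finset.single_le_sum (f := fun k => ΔS n x ^ 2 * (w k x * P k x ^ 2))
        (fun k _ => ?_) hi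
      have hk := (hw k x).1
      positivity
    have hw0 := (hw i x).1
    have hw1 := (hw i x).2
    have h3 : Yf i x ^ 2 ≤ ΔS n x ^ 2 * (w i x * P i x ^ 2) := by
      simp only [hYf_def]
      nlinarith [mul_nonneg (mul_nonneg hw0 (sub_nonneg.2 hw1)) (sq_nonneg (ΔS n x * P i x)),
        sq_nonneg (ΔS n x * P i x)]
    linarith
  -- integrability of Yf i ^ 2, L² membership
  have hYsq_int : ∀ i ∈ Finset.Icc n N, Integrable (fun x => Yf i x ^ 2) μ := by
    intro i hi
    refine (hSDint n).mono ((hYmeas i hi).pow 2) (ae_of_all _ fun x => ?_)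
    rw [Real.norm_eq_abs, Real.norm_eq_abs, abs_of_nonneg (sq_nonneg _),
      abs_of_nonneg (mul_nonneg (sq_nonneg _) (hD0 x))]
    exact hYsq_le i hi x
  have hYL2 : ∀ i ∈ Finset.Icc n N, MemLp (Yf i) 2 μ := fun i hi =>
    (memLp_two_iff_integrable_sq (hYmeas i hi)).2 (hYsq_int i hi)
  have hfint : ∀ i ∈ Finset.Icc n N, Integrable (fun x => H i x * Yf i x) μ := fun i hi =>
    aux_l2_mul_integrable (hH i) (hYL2 i hi)
  -- decomposition of the integrand
  have hg_eq : (fun x => ΔS n x * ∑ i ∈ Finset.Icc n N, H i x * w i x *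
        ∏ j ∈ Finset.Icc (n + 1) i, (1 - β j x * ΔS j x))
      = ∑ i ∈ Finset.Icc n N, (fun x => H i x * Yf i x) := by
    funext x
    rw [Finset.sum_apply, Finset.mul_sum]
    refine Finset.sum_congr rfl fun i _ => ?_
    simp only [hYf_def, hP_def]
    ring
  have hcond := condExp_finsetSum (μ := μ) (m := ℱ (n - 1))
    (f := fun i => fun x => H i x * Yf i x) (s := Finset.Icc n N) hfint
  have hηsum : ηp n =ᵐ[μ] fun x =>
      ∑ i ∈ Finset.Icc n N, (μ[fun y => H i y * Yf i y|ℱ (n - 1)]) x := by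
    refine (hη n hn').trans ?_
    rw [hg_eq]
    refine hcond.trans ?_
    exact Filter.EventuallyEq.of_eq (funext fun x => Finset.sum_apply x _ _)
  -- conditional Cauchy-Schwarz and bounds, for each i
  have hδeq := hδ n hn'
  have hδ0 : ∀ᵐ x ∂μ, 0 ≤ δp n x := by
    filter_upwards [hδeq,
      condExp_nonneg (m := ℱ (n - 1))
        (ae_of_all μ fun x => mul_nonneg (sq_nonneg (ΔS n x)) (hD0 x))] with x hx1 hx2
    rw [hx1]; exact hx2
  have hiall : ∀ᵐ x ∂μ, ∀ i, i ∈ Finset.Icc n N →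
      (|(μ[fun y => H i y * Yf i y|ℱ (n - 1)]) x|
          ≤ Real.sqrt ((μ[fun y => H i y ^ 2|ℱ (n - 1)]) x) * Real.sqrt (δp n x)
        ∧ 0 ≤ (μ[fun y => H i y ^ 2|ℱ (n - 1)]) x) := by
    rw [ae_all_iff]
    intro i
    by_cases hi : i ∈ Finset.Icc n N
    · have hCS := aux_cond_cauchy_schwarz (m := ℱ (n - 1)) (μ := μ) (hH i) (hYL2 i hi)
      have hYle := condExp_mono (m := ℱ (n - 1)) (hYsq_int i hi) (hSDint n)
        (ae_of_all _ (hYsq_le i hi))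
      have hHnn := condExp_nonneg (m := ℱ (n - 1)) (μ := μ)
        (ae_of_all μ fun y => sq_nonneg (H i y))
      filter_upwards [hCS, hYle, hδeq, hHnn] with x hx1 hx2 hx3 hx4 _
      refine ⟨hx1.trans ?_, hx4⟩
      refine mul_le_mul_of_nonneg_left ?_ (Real.sqrt_nonneg _)
      refine Real.sqrt_le_sqrt ?_
      rw [hx3]
      exact hx2
    · exact ae_of_all _ fun x hx => absurd hx hi
  -- conclusion
  filter_upwards [hηsum, hiall, hδ0] with x hx1 hx2 hx3
  have hcard : ((Finset.Icc n N).card : ℝ) = (N : ℝ) - n + 1 := by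
    rw [Nat.card_Icc, Nat.cast_sub (by omega : n ≤ N + 1)]
    push_cast
    ring
  have h_first : |ηp n x| ≤ (∑ i ∈ Finset.Icc n N,
      Real.sqrt ((μ[fun y => H i y ^ 2|ℱ (n - 1)]) x)) * Real.sqrt (δp n x) := by
    calc |ηp n x| = |∑ i ∈ Finset.Icc n N, (μ[fun y => H i y * Yf i y|ℱ (n - 1)]) x| := by
          rw [hx1]
      _ ≤ ∑ i ∈ Finset.Icc n N, |(μ[fun y => H i y * Yf i y|ℱ (n - 1)]) x| :=
          Finset.abs_sum_le_sum_abs _ _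
      _ ≤ ∑ i ∈ Finset.Icc n N,
            Real.sqrt ((μ[fun y => H i y ^ 2|ℱ (n - 1)]) x) * Real.sqrt (δp n x) :=
          Finset.sum_le_sum fun i hi => (hx2 i hi).1
      _ = (∑ i ∈ Finset.Icc n N,
            Real.sqrt ((μ[fun y => H i y ^ 2|ℱ (n - 1)]) x)) * Real.sqrt (δp n x) :=
          (Finset.sum_mul _ _ _).symm
  refine ⟨h_first, ?_⟩
  have hE0 : 0 ≤ ∑ i ∈ Finset.Icc n N, (μ[fun y => H i y ^ 2|ℱ (n - 1)]) x :=
    Finset.sum_nonneg fun i hi => (hx2 i hi).2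
  have hC0 : (0:ℝ) ≤ (N : ℝ) - n + 1 := by
    have : (n : ℝ) ≤ N := by exact_mod_cast hnN
    linarith
  have hsq : ηp n x ^ 2 ≤ (∑ i ∈ Finset.Icc n N,
      Real.sqrt ((μ[fun y => H i y ^ 2|ℱ (n - 1)]) x)) ^ 2 * δp n x := by
    calc ηp n x ^ 2 = |ηp n x| ^ 2 := (sq_abs _).symm
      _ ≤ ((∑ i ∈ Finset.Icc n N,
            Real.sqrt ((μ[fun y => H i y ^ 2|ℱ (n - 1)]) x)) * Real.sqrt (δp n x)) ^ 2 :=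
          pow_le_pow_left₀ (abs_nonneg _) h_first 2
      _ = (∑ i ∈ Finset.Icc n N,
            Real.sqrt ((μ[fun y => H i y ^ 2|ℱ (n - 1)]) x)) ^ 2 * δp n x := by
          rw [mul_pow, Real.sq_sqrt hx3]
  have hAB : (∑ i ∈ Finset.Icc n N,
      Real.sqrt ((μ[fun y => H i y ^ 2|ℱ (n - 1)]) x)) ^ 2
      ≤ ((Finset.Icc n N).card : ℝ)
        * ∑ i ∈ Finset.Icc n N, (μ[fun y => H i y ^ 2|ℱ (n - 1)]) x := by
    refine le_trans (sq_sum_le_card_mul_sum_sq (s := Finset.Icc n N)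
      (f := fun i => Real.sqrt ((μ[fun y => H i y ^ 2|ℱ (n - 1)]) x))) ?_
    refine mul_le_mul_of_nonneg_left ?_ (by positivity)
    exact le_of_eq (Finset.sum_congr rfl fun i hi => Real.sq_sqrt ((hx2 i hi).2))
  rcases eq_or_lt_of_le hx3 with h0 | hpos
  · rw [← h0, div_zero]
    exact mul_nonneg hC0 hE0
  · rw [div_le_iff₀ hpos]
    calc ηp n x ^ 2 ≤ (∑ i ∈ Finset.Icc n N,
          Real.sqrt ((μ[fun y => H i y ^ 2|ℱ (n - 1)]) x)) ^ 2 * δp n x := hsq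
      _ ≤ (((Finset.Icc n N).card : ℝ)
            * ∑ i ∈ Finset.Icc n N, (μ[fun y => H i y ^ 2|ℱ (n - 1)]) x) * δp n x :=
          mul_le_mul_of_nonneg_right hAB hx3
      _ = ((N : ℝ) - n + 1)
            * (∑ i ∈ Finset.Icc n N, (μ[fun y => H i y ^ 2|ℱ (n - 1)]) x) * δp n x := by
          rw [hcard]
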